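/- Let L be a real inner product space, m and m' positive integers, S a real m × m' matrix, and h : {1,…,m} → L. Let e = (e_1,…,e_{m'}) be a random vector whose coordinates are independent standard Gaussian random variables. Then E‖∑_{j=1}^{m} (S e)_j h_j‖² = ∑_{j,k=1}^{m} (S Sᵀ)_{jk} ⟨h_j, h_k⟩ ≤ ‖S‖_{op}² ∑_{j=1}^{m} ‖h_j‖², where ‖S‖_{op} := sup_{‖θ‖≤1} ‖Sθ‖ is the operator norm of S with respect to Euclidean norms. -/

import Mathlib

open scoped BigOperators
open MeasureTheory ProbabilityTheory

/-- The Euclidean norm on `ℝ^n`. -/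
noncomputable def euclNorm {n : ℕ} (v : Fin n → ℝ) : ℝ :=
  Real.sqrt (∑ i, v i ^ 2)

section AuxStmt1
open Real
open scoped ENNReal NNReal

lemma pdf01 : gaussianPDFReal 0 1 = fun x => (Real.sqrt (2 * π))⁻¹ * Real.exp (-(2⁻¹) * x ^ 2) := by
  ext x
  rw [gaussianPDFReal]
  norm_num
  ring_nf
  exact Or.inl trivial

lemma gauss_int (f : ℝ → ℝ) :
    ∫ x, f x ∂(gaussianReal 0 1) = ∫ x, gaussianPDFReal 0 1 x * f x := by
  rw [gaussianReal_of_var_ne_zero _ one_ne_zero, gaussianPDF_def]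
  have h1 : ∀ x, ENNReal.ofReal (gaussianPDFReal 0 1 x) = ((gaussianPDFReal 0 1 x).toNNReal : ℝ≥0∞) := fun x => rfl
  simp_rw [h1]
  rw [integral_withDensity_eq_integral_smul ((measurable_gaussianPDFReal 0 1).real_toNNReal) f]
  congr 1
  ext x
  simp [NNReal.smul_def, Real.coe_toNNReal _ (gaussianPDFReal_nonneg 0 1 x)]

lemma gauss_integrable (f : ℝ → ℝ)
    (hif : Integrable (fun x => gaussianPDFReal 0 1 x * f x)) :
    Integrable f (gaussianReal 0 1) := by
  rw [gaussianReal_of_var_ne_zero _ one_ne_zero, gaussianPDF_def]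
  have h1 : ∀ x, ENNReal.ofReal (gaussianPDFReal 0 1 x) = ((gaussianPDFReal 0 1 x).toNNReal : ℝ≥0∞) := fun x => rfl
  simp_rw [h1]
  rw [integrable_withDensity_iff_integrable_smul ((measurable_gaussianPDFReal 0 1).real_toNNReal)]
  refine hif.congr (Filter.Eventually.of_forall fun x => ?_)
  simp [NNReal.smul_def, Real.coe_toNNReal _ (gaussianPDFReal_nonneg 0 1 x)]

lemma int_x_exp : ∫ x : ℝ, x * Real.exp (-(2⁻¹) * x ^ 2) = 0 := by
  have h := integral_neg_eq_self (fun x : ℝ => x * Real.exp (-(2⁻¹) * x ^ 2)) (volume : Measure ℝ)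
  simp only [neg_neg, neg_sq, neg_mul, integral_neg] at h
  simp only [neg_mul] at h ⊢
  linarith

lemma int_sq_exp : ∫ x : ℝ, x ^ 2 * Real.exp (-(2⁻¹) * x ^ 2) = Real.sqrt (2 * π) := by
  have habs : ∀ x : ℝ, |x| ^ 2 * Real.exp (-(2⁻¹) * |x| ^ 2) = x ^ 2 * Real.exp (-(2⁻¹) * x ^ 2) := by
    intro x; rw [sq_abs]
  have h2 : ∫ x : ℝ, x ^ 2 * Real.exp (-(2⁻¹) * x ^ 2)
      = 2 * ∫ x in Set.Ioi (0:ℝ), x ^ 2 * Real.exp (-(2⁻¹) * x ^ 2) := by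
    rw [← integral_comp_abs (f := fun x => x ^ 2 * Real.exp (-(2⁻¹) * x ^ 2))]
    simp_rw [habs]
  have h3 : ∫ x in Set.Ioi (0:ℝ), x ^ 2 * Real.exp (-(2⁻¹) * x ^ 2)
      = ((2:ℝ)⁻¹) ^ (-(3:ℝ)/2) * (1/2) * Real.Gamma (3/2) := by
    have hint := integral_rpow_mul_exp_neg_mul_rpow (p := 2) (q := 2) (b := 2⁻¹)
      (by norm_num) (by norm_num) (by norm_num)
    norm_num at hint
    rw [show ((2:ℝ)⁻¹) ^ (-(3:ℝ)/2) = ((1:ℝ)/2) ^ (-(3/2) : ℝ) by norm_num]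
    rw [← hint]
    refine setIntegral_congr_fun measurableSet_Ioi (fun x hx => ?_)
    ring_nf
  have hGamma : Real.Gamma (3/2) = Real.sqrt π / 2 := by
    have hg := Real.Gamma_add_one (s := 1/2) (by norm_num)
    rw [show (3:ℝ)/2 = 1/2 + 1 by norm_num, hg, Real.Gamma_one_half_eq]
    ring
  have hpow : ((2:ℝ)⁻¹) ^ (-(3:ℝ)/2) = 2 * Real.sqrt 2 := by
    rw [Real.inv_rpow (by norm_num : (0:ℝ) ≤ 2), ← Real.rpow_neg (by norm_num : (0:ℝ) ≤ 2)]
    rw [show (-(-(3:ℝ)/2)) = 1 + 1/2 by norm_num,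
      Real.rpow_add (by norm_num : (0:ℝ) < 2), Real.rpow_one,
      ← Real.sqrt_eq_rpow]
  rw [h2, h3, hGamma, hpow]
  rw [Real.sqrt_mul (by norm_num : (0:ℝ) ≤ 2)]
  rw [show (2:ℝ) * (2 * Real.sqrt 2 * (1/2) * (Real.sqrt π / 2)) = Real.sqrt 2 * Real.sqrt π by ring]

lemma sqrt2pi_pos : (0:ℝ) < Real.sqrt (2 * π) :=
  Real.sqrt_pos.mpr (by positivity)

lemma gauss_moment1 : ∫ x, x ∂(gaussianReal 0 1) = 0 := by
  rw [gauss_int (fun x => x)]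
  simp_rw [pdf01]
  calc ∫ x : ℝ, (Real.sqrt (2*π))⁻¹ * Real.exp (-(2⁻¹) * x ^ 2) * x
      = ∫ x : ℝ, (Real.sqrt (2*π))⁻¹ * (x * Real.exp (-(2⁻¹) * x ^ 2)) := by
        congr 1; ext x; ring
    _ = (Real.sqrt (2*π))⁻¹ * ∫ x : ℝ, x * Real.exp (-(2⁻¹) * x ^ 2) := integral_const_mul _ _
    _ = 0 := by rw [int_x_exp, mul_zero]

lemma gauss_moment2 : ∫ x, x ^ 2 ∂(gaussianReal 0 1) = 1 := by
  rw [gauss_int (fun x => x ^ 2)]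
  simp_rw [pdf01]
  calc ∫ x : ℝ, (Real.sqrt (2*π))⁻¹ * Real.exp (-(2⁻¹) * x ^ 2) * x ^ 2
      = ∫ x : ℝ, (Real.sqrt (2*π))⁻¹ * (x ^ 2 * Real.exp (-(2⁻¹) * x ^ 2)) := by
        congr 1; ext x; ring
    _ = (Real.sqrt (2*π))⁻¹ * ∫ x : ℝ, x ^ 2 * Real.exp (-(2⁻¹) * x ^ 2) := integral_const_mul _ _
    _ = 1 := by rw [int_sq_exp, inv_mul_cancel₀ (ne_of_gt sqrt2pi_pos)]

lemma gauss_integrable1 : Integrable (fun x : ℝ => x) (gaussianReal 0 1) := by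
  apply gauss_integrable
  have h := (integrable_mul_exp_neg_mul_sq (b := 2⁻¹) (by norm_num)).const_mul
    ((Real.sqrt (2*π))⁻¹)
  refine h.congr (Filter.Eventually.of_forall fun x => ?_)
  simp_rw [pdf01]; ring

lemma gauss_integrable2 : Integrable (fun x : ℝ => x ^ 2) (gaussianReal 0 1) := by
  apply gauss_integrable
  have h := (integrable_rpow_mul_exp_neg_mul_sq (b := 2⁻¹) (by norm_num) (s := 2)
    (by norm_num)).const_mul ((Real.sqrt (2*π))⁻¹)
  refine h.congr (Filter.Eventually.of_forall fun x => ?_)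
  simp_rw [pdf01]
  rw [show ((2:ℝ)) = ((2:ℕ):ℝ) by norm_num, Real.rpow_natCast]
  ring

section Part1
variable {L : Type*} [NormedAddCommGroup L] [InnerProductSpace ℝ L]
    {Ω : Type*} [MeasurableSpace Ω] (P : Measure Ω) [IsProbabilityMeasure P]
    {m m' : ℕ} (S : Matrix (Fin m) (Fin m') ℝ) (h : Fin m → L)
    (e : Ω → Fin m' → ℝ)

lemma part1
    (hmeas : ∀ i, Measurable fun ω => e ω i)
    (hlaw : ∀ i, Measure.map (fun ω => e ω i) P = gaussianReal 0 1)
    (hindep : iIndepFun (fun i ω => e ω i) P) :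
    (∫ ω, ‖∑ j : Fin m, S.mulVec (e ω) j • h j‖ ^ 2 ∂P)
        = ∑ j : Fin m, ∑ k : Fin m, (S * S.transpose) j k * (inner ℝ (h j) (h k) : ℝ) := by
  have int_e : ∀ i, Integrable (fun ω => e ω i) P := by
    intro i
    have h1 : Integrable (fun x : ℝ => x) (Measure.map (fun ω => e ω i) P) := by
      rw [hlaw i]; exact gauss_integrable1
    exact (integrable_map_measure h1.aestronglyMeasurable (hmeas i).aemeasurable).mp h1
  have int_e2 : ∀ i, Integrable (fun ω => e ω i * e ω i) P := by
    intro i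
    have h1 : Integrable (fun x : ℝ => x ^ 2) (Measure.map (fun ω => e ω i) P) := by
      rw [hlaw i]; exact gauss_integrable2
    have h2 := (integrable_map_measure h1.aestronglyMeasurable (hmeas i).aemeasurable).mp h1
    exact h2.congr (Filter.Eventually.of_forall fun ω => by simp [Function.comp, sq])
  have hprod : ∀ i l, Integrable (fun ω => e ω i * e ω l) P := by
    intro i l
    rcases eq_or_ne i l with rfl | hne
    · exact int_e2 i
    · exact (hindep.indepFun hne).integrable_mul (int_e i) (int_e l)
  have hEprod : ∀ i l, (∫ ω, e ω i * e ω l ∂P) = if i = l then 1 else 0 := by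
    intro i l
    rcases eq_or_ne i l with rfl | hne
    · simp only [if_pos rfl]
      have hs : AEStronglyMeasurable (fun x : ℝ => x ^ 2) (Measure.map (fun ω => e ω i) P) :=
        (measurable_id.pow_const 2).aestronglyMeasurable
      calc (∫ ω, e ω i * e ω i ∂P) = ∫ ω, (e ω i) ^ 2 ∂P := by congr 1; ext ω; ring
        _ = ∫ x, x ^ 2 ∂(Measure.map (fun ω => e ω i) P) :=
            (integral_map (hmeas i).aemeasurable hs).symm
        _ = 1 := by rw [hlaw i]; exact gauss_moment2
    · rw [if_neg hne]
      have h0 : ∀ i, (∫ ω, e ω i ∂P) = 0 := by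
        intro i
        have hs : AEStronglyMeasurable (fun x : ℝ => x) (Measure.map (fun ω => e ω i) P) :=
          measurable_id.aestronglyMeasurable
        calc (∫ ω, e ω i ∂P) = ∫ x, x ∂(Measure.map (fun ω => e ω i) P) :=
              (integral_map (hmeas i).aemeasurable hs).symm
          _ = 0 := by rw [hlaw i]; exact gauss_moment1
      have hm := IndepFun.integral_mul_eq_mul_integral (hindep.indepFun hne) (int_e i).aestronglyMeasurable (int_e l).aestronglyMeasurable
      calc (∫ ω, e ω i * e ω l ∂P)
          = ∫ ω, ((fun ω => e ω i) * fun ω => e ω l) ω ∂P := rfl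
        _ = (∫ ω, e ω i ∂P) * ∫ ω, e ω l ∂P := hm
        _ = 0 := by rw [h0 i, h0 l, mul_zero]
  have expand : ∀ ω, ‖∑ j : Fin m, S.mulVec (e ω) j • h j‖ ^ 2
      = ∑ j : Fin m, ∑ k : Fin m, ∑ i : Fin m', ∑ l : Fin m',
          S j i * S k l * (inner ℝ (h j) (h k) : ℝ) * (e ω i * e ω l) := by
    intro ω
    rw [← real_inner_self_eq_norm_sq, sum_inner]
    refine Finset.sum_congr rfl fun j _ => ?_
    rw [inner_sum]
    refine Finset.sum_congr rfl fun k _ => ?_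
    rw [real_inner_smul_left, real_inner_smul_right]
    simp only [Matrix.mulVec, dotProduct, Finset.sum_mul, Finset.mul_sum]
    rw [Finset.sum_comm]
    refine Finset.sum_congr rfl fun i _ => Finset.sum_congr rfl fun l _ => by ring
  simp_rw [expand]
  rw [integral_finset_sum _ (fun j _ => integrable_finset_sum _ fun k _ =>
    integrable_finset_sum _ fun i _ => integrable_finset_sum _ fun l _ =>
      ((hprod i l).const_mul _))]
  refine Finset.sum_congr rfl fun j _ => ?_
  rw [integral_finset_sum _ (fun k _ => integrable_finset_sum _ fun i _ =>
    integrable_finset_sum _ fun l _ => ((hprod i l).const_mul _))]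
  refine Finset.sum_congr rfl fun k _ => ?_
  rw [integral_finset_sum _ (fun i _ => integrable_finset_sum _ fun l _ =>
    ((hprod i l).const_mul _))]
  rw [Matrix.mul_apply, Finset.sum_mul]
  refine Finset.sum_congr rfl fun i _ => ?_
  rw [integral_finset_sum _ (fun l _ => ((hprod i l).const_mul _))]
  simp_rw [integral_const_mul, hEprod]
  simp [Matrix.transpose_apply, Finset.sum_ite_eq, mul_ite]
end Part1

section Part2

lemma euclNorm_zero {n : ℕ} : euclNorm (0 : Fin n → ℝ) = 0 := by
  unfold euclNorm; simp

lemma euclNorm_nonneg {n : ℕ} (v : Fin n → ℝ) : 0 ≤ euclNorm v := Real.sqrt_nonneg _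

lemma euclNorm_sq {n : ℕ} (v : Fin n → ℝ) : euclNorm v ^ 2 = ∑ i, v i ^ 2 :=
  Real.sq_sqrt (by positivity)

lemma dot_le_euclNorm {n : ℕ} (v w : Fin n → ℝ) :
    dotProduct v w ≤ euclNorm v * euclNorm w :=
  Real.sum_mul_le_sqrt_mul_sqrt _ _ _

lemma euclNorm_smul {n : ℕ} (a : ℝ) (v : Fin n → ℝ) :
    euclNorm (a • v) = |a| * euclNorm v := by
  unfold euclNorm
  simp_rw [Pi.smul_apply, smul_eq_mul, mul_pow, ← Finset.mul_sum,
    Real.sqrt_mul (sq_nonneg a), Real.sqrt_sq_eq_abs]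

lemma euclNorm_eq_zero {n : ℕ} {v : Fin n → ℝ} (hv : euclNorm v = 0) : v = 0 := by
  have h1 : ∑ i, v i ^ 2 = 0 := by
    have := euclNorm_sq v
    rw [hv] at this
    simpa using this.symm
  funext i
  have h2 := (Finset.sum_eq_zero_iff_of_nonneg (fun i _ => sq_nonneg (v i))).mp h1 i
    (Finset.mem_univ i)
  exact pow_eq_zero_iff (by norm_num) |>.mp h2

variable {m m' : ℕ} (S : Matrix (Fin m) (Fin m') ℝ)

lemma opnorm_facts :
    0 ≤ (sSup ((fun θ : Fin m' → ℝ => euclNorm (S.mulVec θ)) '' {θ | euclNorm θ ≤ 1})) ∧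
    ∀ θ, euclNorm (S.mulVec θ)
      ≤ (sSup ((fun θ : Fin m' → ℝ => euclNorm (S.mulVec θ)) '' {θ | euclNorm θ ≤ 1}))
        * euclNorm θ := by
  set A := (fun θ : Fin m' → ℝ => euclNorm (S.mulVec θ)) '' {θ | euclNorm θ ≤ 1} with hA
  have hbdd : BddAbove A := by
    refine ⟨Real.sqrt (∑ j, (∑ i, |S j i|) ^ 2), ?_⟩
    rintro x ⟨θ, hθ, rfl⟩
    simp only [Set.mem_setOf_eq] at hθ
    have habs : ∀ i, |θ i| ≤ 1 := by
      intro i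
      calc |θ i| = Real.sqrt (θ i ^ 2) := (Real.sqrt_sq_eq_abs _).symm
        _ ≤ euclNorm θ := Real.sqrt_le_sqrt
            (Finset.single_le_sum (fun i _ => sq_nonneg (θ i)) (Finset.mem_univ i))
        _ ≤ 1 := hθ
    unfold euclNorm
    apply Real.sqrt_le_sqrt
    refine Finset.sum_le_sum fun j _ => ?_
    have h1 : |S.mulVec θ j| ≤ ∑ i, |S j i| := by
      calc |S.mulVec θ j| = |∑ i, S j i * θ i| := rfl
        _ ≤ ∑ i, |S j i * θ i| := Finset.abs_sum_le_sum_abs _ _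
        _ ≤ ∑ i, |S j i| := Finset.sum_le_sum fun i _ => by
            rw [abs_mul]
            exact mul_le_of_le_one_right (abs_nonneg _) (habs i)
    calc S.mulVec θ j ^ 2 = |S.mulVec θ j| ^ 2 := (sq_abs _).symm
      _ ≤ (∑ i, |S j i|) ^ 2 := by
          apply pow_le_pow_left₀ (abs_nonneg _) h1
  have hmem0 : (0:ℝ) ∈ A := by
    refine ⟨0, ?_, ?_⟩
    · simp only [Set.mem_setOf_eq]
      unfold euclNorm
      simp
    · show euclNorm (S.mulVec 0) = 0
      rw [Matrix.mulVec_zero, euclNorm_zero]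
  have hc0 : 0 ≤ sSup A := le_csSup hbdd hmem0
  refine ⟨hc0, fun θ => ?_⟩
  by_cases hθ : euclNorm θ = 0
  · rw [euclNorm_eq_zero hθ, Matrix.mulVec_zero, euclNorm_zero, euclNorm_zero, mul_zero]
  · have hpos : 0 < euclNorm θ := lt_of_le_of_ne (euclNorm_nonneg θ) (Ne.symm hθ)
    have hmem : euclNorm (S.mulVec ((euclNorm θ)⁻¹ • θ)) ∈ A := by
      refine ⟨(euclNorm θ)⁻¹ • θ, ?_, rfl⟩
      simp only [Set.mem_setOf_eq, euclNorm_smul, abs_of_pos (inv_pos.mpr hpos)]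
      rw [inv_mul_cancel₀ hθ]
    have hle := le_csSup hbdd hmem
    rw [Matrix.mulVec_smul, euclNorm_smul, abs_of_pos (inv_pos.mpr hpos)] at hle
    calc euclNorm (S.mulVec θ)
        = euclNorm θ * ((euclNorm θ)⁻¹ * euclNorm (S.mulVec θ)) := by
          field_simp
      _ ≤ euclNorm θ * sSup A := by
          exact mul_le_mul_of_nonneg_left hle (le_of_lt hpos)
      _ = sSup A * euclNorm θ := mul_comm _ _

end Part2

section Part2b
variable {L : Type*} [NormedAddCommGroup L] [InnerProductSpace ℝ L]
variable {m m' : ℕ}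

lemma quad_expand (M : Matrix (Fin m) (Fin m) ℝ) (h : Fin m → L) (i : Fin m) :
    ‖∑ j : Fin m, M i j • h j‖ ^ 2
      = ∑ j : Fin m, ∑ k : Fin m, M i j * M i k * (inner ℝ (h j) (h k) : ℝ) := by
  rw [← real_inner_self_eq_norm_sq, sum_inner]
  refine Finset.sum_congr rfl fun j _ => ?_
  rw [inner_sum]
  refine Finset.sum_congr rfl fun k _ => ?_
  rw [real_inner_smul_left, real_inner_smul_right]
  ring

lemma part2 (S : Matrix (Fin m) (Fin m') ℝ) (h : Fin m → L) :
    ∑ j : Fin m, ∑ k : Fin m, (S * S.transpose) j k * (inner ℝ (h j) (h k) : ℝ)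
        ≤ (sSup ((fun θ : Fin m' → ℝ => euclNorm (S.mulVec θ)) '' {θ | euclNorm θ ≤ 1})) ^ 2
            * ∑ j : Fin m, ‖h j‖ ^ 2 := by
  obtain ⟨hc0, hSle⟩ := opnorm_facts S
  set c := sSup ((fun θ : Fin m' → ℝ => euclNorm (S.mulVec θ)) '' {θ | euclNorm θ ≤ 1}) with hc
  -- transpose bound
  have hT : ∀ v : Fin m → ℝ, euclNorm (S.transpose.mulVec v) ≤ c * euclNorm v := by
    intro v
    set w := S.transpose.mulVec v with hw
    have hsq : euclNorm w ^ 2 = dotProduct w w := by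
      rw [euclNorm_sq]
      exact Finset.sum_congr rfl fun i _ => sq (w i)
    have hdot : dotProduct w w = dotProduct v (S.mulVec w) := by
      rw [hw, Matrix.mulVec_transpose, ← Matrix.dotProduct_mulVec]
    have hchain : euclNorm w ^ 2 ≤ euclNorm v * (c * euclNorm w) := by
      rw [hsq, hdot]
      calc dotProduct v (S.mulVec w) ≤ euclNorm v * euclNorm (S.mulVec w) :=
            dot_le_euclNorm _ _
        _ ≤ euclNorm v * (c * euclNorm w) :=
            mul_le_mul_of_nonneg_left (hSle w) (euclNorm_nonneg v)
    rcases eq_or_lt_of_le (euclNorm_nonneg w) with h0 | hpos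
    · rw [← h0]
      exact mul_nonneg hc0 (euclNorm_nonneg v)
    · have := hchain
      rw [sq] at this
      have h2 : euclNorm w * euclNorm w ≤ (c * euclNorm v) * euclNorm w := by
        calc euclNorm w * euclNorm w ≤ euclNorm v * (c * euclNorm w) := this
          _ = (c * euclNorm v) * euclNorm w := by ring
      exact le_of_mul_le_mul_right h2 hpos
  have hquad : ∀ v : Fin m → ℝ, dotProduct v ((S * S.transpose).mulVec v)
      ≤ c ^ 2 * ∑ j, v j ^ 2 := by
    intro v
    have h1 : dotProduct v ((S * S.transpose).mulVec v)
        = euclNorm (S.transpose.mulVec v) ^ 2 := by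
      rw [← Matrix.mulVec_mulVec, Matrix.dotProduct_mulVec, ← Matrix.mulVec_transpose,
        euclNorm_sq]
      exact Finset.sum_congr rfl fun i _ => (sq _).symm
    rw [h1]
    calc euclNorm (S.transpose.mulVec v) ^ 2 ≤ (c * euclNorm v) ^ 2 := by
          apply pow_le_pow_left₀ (euclNorm_nonneg _) (hT v)
      _ = c ^ 2 * euclNorm v ^ 2 := by ring
      _ = c ^ 2 * ∑ j, v j ^ 2 := by rw [euclNorm_sq]
  -- PSD matrix B
  have hpsd : (c ^ 2 • (1 : Matrix (Fin m) (Fin m) ℝ) - S * S.transpose).PosSemidef := by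
    refine Matrix.PosSemidef.of_dotProduct_mulVec_nonneg ?_ ?_
    · show _ = _
      ext i j
      simp only [Matrix.conjTranspose_apply, Matrix.sub_apply, Matrix.smul_apply,
        Matrix.one_apply, Matrix.mul_apply, Matrix.transpose_apply, star_trivial]
      congr 1
      · simp [eq_comm]
      · exact Finset.sum_congr rfl fun t _ => mul_comm _ _
    · intro x
      simp only [star_trivial, Matrix.sub_mulVec, dotProduct_sub, Matrix.smul_mulVec,
        Matrix.one_mulVec, dotProduct_smul, smul_eq_mul]
      have h2 : dotProduct x x = ∑ j, x j ^ 2 :=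
        Finset.sum_congr rfl fun i _ => (sq _).symm
      have := hquad x
      rw [h2]
      linarith
  obtain ⟨M, hM⟩ : ∃ M : Matrix (Fin m) (Fin m) ℝ,
      c ^ 2 • (1 : Matrix (Fin m) (Fin m) ℝ) - S * S.transpose = M.conjTranspose * M := by
    open scoped MatrixOrder in
    exact CStarAlgebra.nonneg_iff_eq_star_mul_self.mp hpsd.nonneg
  have hB : ∀ j k, (c ^ 2 • (1 : Matrix (Fin m) (Fin m) ℝ) - S * S.transpose) j k
      = ∑ i, M i j * M i k := by
    intro j k
    rw [hM, Matrix.mul_apply]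
    exact Finset.sum_congr rfl fun i _ => by
      simp [Matrix.conjTranspose_apply, star_trivial]
  have hBnonneg : 0 ≤ ∑ j : Fin m, ∑ k : Fin m,
      (c ^ 2 • (1 : Matrix (Fin m) (Fin m) ℝ) - S * S.transpose) j k
        * (inner ℝ (h j) (h k) : ℝ) := by
    have heq : ∑ j : Fin m, ∑ k : Fin m,
        (c ^ 2 • (1 : Matrix (Fin m) (Fin m) ℝ) - S * S.transpose) j k
          * (inner ℝ (h j) (h k) : ℝ)
        = ∑ i : Fin m, ‖∑ j : Fin m, M i j • h j‖ ^ 2 := by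
      simp_rw [hB, quad_expand, Finset.sum_mul]
      have hswap : ∀ j : Fin m, ∑ k : Fin m, ∑ i : Fin m,
          M i j * M i k * (inner ℝ (h j) (h k) : ℝ)
          = ∑ i : Fin m, ∑ k : Fin m, M i j * M i k * (inner ℝ (h j) (h k) : ℝ) :=
        fun j => Finset.sum_comm
      simp_rw [hswap]
      rw [Finset.sum_comm]
    rw [heq]
    exact Finset.sum_nonneg fun i _ => sq_nonneg _
  -- conclude
  have hid : ∑ j : Fin m, ∑ k : Fin m,
      (c ^ 2 • (1 : Matrix (Fin m) (Fin m) ℝ)) j k * (inner ℝ (h j) (h k) : ℝ)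
      = c ^ 2 * ∑ j : Fin m, ‖h j‖ ^ 2 := by
    rw [Finset.mul_sum]
    refine Finset.sum_congr rfl fun j _ => ?_
    have : ∀ k, (c ^ 2 • (1 : Matrix (Fin m) (Fin m) ℝ)) j k * (inner ℝ (h j) (h k) : ℝ)
        = if k = j then c ^ 2 * (inner ℝ (h j) (h k) : ℝ) else 0 := by
      intro k
      simp only [Matrix.smul_apply, Matrix.one_apply, smul_eq_mul]
      by_cases hjk : j = k
      · subst hjk; simp
      · rw [if_neg hjk, if_neg (Ne.symm hjk)]; ring
    simp_rw [this]
    rw [Finset.sum_ite_eq' Finset.univ j (fun k => c ^ 2 * (inner ℝ (h j) (h k) : ℝ))]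
    simp [real_inner_self_eq_norm_sq]
  have hsplit : ∀ j k, (c ^ 2 • (1 : Matrix (Fin m) (Fin m) ℝ)) j k * (inner ℝ (h j) (h k) : ℝ)
      = (c ^ 2 • (1 : Matrix (Fin m) (Fin m) ℝ) - S * S.transpose) j k * (inner ℝ (h j) (h k) : ℝ)
        + (S * S.transpose) j k * (inner ℝ (h j) (h k) : ℝ) := by
    intro j k
    rw [Matrix.sub_apply]
    ring
  have hfinal : ∑ j : Fin m, ∑ k : Fin m,
      (c ^ 2 • (1 : Matrix (Fin m) (Fin m) ℝ)) j k * (inner ℝ (h j) (h k) : ℝ)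
      = (∑ j : Fin m, ∑ k : Fin m,
          (c ^ 2 • (1 : Matrix (Fin m) (Fin m) ℝ) - S * S.transpose) j k
            * (inner ℝ (h j) (h k) : ℝ))
        + ∑ j : Fin m, ∑ k : Fin m, (S * S.transpose) j k * (inner ℝ (h j) (h k) : ℝ) := by
    simp_rw [hsplit, Finset.sum_add_distrib]
  rw [← hid, hfinal]
  linarith

end Part2b

end AuxStmt1

/-- Key average-case second-moment estimate (Corollary C.1): if `e` has i.i.d. standard
Gaussian coordinates, then `E‖∑_j (Se)_j h_j‖² = ∑_{j,k} (SSᵀ)_{jk} ⟨h_j, h_k⟩`, which is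
bounded by `‖S‖_op² ∑_j ‖h_j‖²` where `‖S‖_op` is the Euclidean operator norm of `S`. -/
theorem stmt1
    {L : Type*} [NormedAddCommGroup L] [InnerProductSpace ℝ L]
    {Ω : Type*} [MeasurableSpace Ω] (P : Measure Ω) [IsProbabilityMeasure P]
    {m m' : ℕ} (S : Matrix (Fin m) (Fin m') ℝ) (h : Fin m → L)
    (e : Ω → Fin m' → ℝ)
    (hmeas : ∀ i, Measurable fun ω => e ω i)
    (hlaw : ∀ i, Measure.map (fun ω => e ω i) P = gaussianReal 0 1)
    (hindep : iIndepFun (fun i ω => e ω i) P) :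
    (∫ ω, ‖∑ j : Fin m, S.mulVec (e ω) j • h j‖ ^ 2 ∂P)
        = ∑ j : Fin m, ∑ k : Fin m, (S * S.transpose) j k * (inner ℝ (h j) (h k) : ℝ) ∧
      ∑ j : Fin m, ∑ k : Fin m, (S * S.transpose) j k * (inner ℝ (h j) (h k) : ℝ)
        ≤ (sSup ((fun θ : Fin m' → ℝ => euclNorm (S.mulVec θ)) '' {θ | euclNorm θ ≤ 1})) ^ 2
            * ∑ j : Fin m, ‖h j‖ ^ 2 := by
  exact ⟨part1 P S h e hmeas hlaw hindep, part2 S h⟩
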